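/- Let G be a finite simple 3-regular graph on vertex set {1,…,n} with m = 3n/2 edges, let c be a positive integer, let f_c be the associated regression objective, and let OPT_c = inf over z ∈ ℝ^n of f_c(z). Then m − OPT_c/4 − 18·n/c ≤ MAXCUT(G) ≤ m − OPT_c/4. -/
import Mathlib


open Classical Finset

/-- The regression objective `f_c(z) = Σ_{{u,v}∈E} (z_u + z_v)² + c·Σ_j (|z_j| − 1)²`
associated to a finite simple graph `G` and a positive integer `c`; it equals
`‖ |Wz| − y ‖₂²` for the corresponding ℓ₂-regression-with-hidden-signs instance. -/
noncomputable def fObj {n : ℕ} (G : SimpleGraph (Fin n)) [Fintype G.edgeSet] (c : ℕ)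
    (z : Fin n → ℝ) : ℝ :=
  (∑ e ∈ G.edgeFinset, Sym2.lift ⟨fun u v => (z u + z v) ^ 2, fun u v => by ring⟩ e)
    + c * ∑ j : Fin n, (|z j| - 1) ^ 2

/-- `cutCard G S` is the number of edges of `G` with exactly one endpoint in `S`. -/
noncomputable def cutCard {n : ℕ} (G : SimpleGraph (Fin n)) [Fintype G.edgeSet]
    (S : Finset (Fin n)) : ℕ :=
  (G.edgeFinset.filter
    (fun e => Sym2.lift ⟨fun u v => ((u ∈ S) ≠ (v ∈ S)), fun u v => propext ne_comm⟩ e)).card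

/-- `maxCut G` is the maximum of `cutCard G S` over all vertex subsets `S`. -/
noncomputable def maxCut {n : ℕ} (G : SimpleGraph (Fin n)) [Fintype G.edgeSet] : ℕ :=
  Finset.univ.sup (fun S : Finset (Fin n) => cutCard G S)

/-- Summing `g u + g v` over the edges `{u,v}` equals the degree-weighted vertex sum. -/
lemma sum_edge_add {n : ℕ} (G : SimpleGraph (Fin n)) [DecidableRel G.Adj] (g : Fin n → ℝ) :
    ∑ e ∈ G.edgeFinset, Sym2.lift ⟨fun u v => g u + g v, fun u v => by ring⟩ e
      = ∑ j : Fin n, (G.degree j : ℝ) * g j := by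
  have h1 : ∀ e ∈ G.edgeFinset,
      Sym2.lift ⟨fun u v => g u + g v, fun u v => by ring⟩ e
        = ∑ j : Fin n, if j ∈ e then g j else 0 := by
    intro e he
    induction e with
    | _ u v =>
      have hadj : G.Adj u v := by simpa using he
      have hne : u ≠ v := hadj.ne
      have hset : (Finset.univ.filter (fun j : Fin n => j ∈ s(u, v))) = {u, v} := by
        ext j; simp [Sym2.mem_iff]
      rw [Sym2.lift_mk, ← Finset.sum_filter, hset, Finset.sum_pair hne]
  rw [Finset.sum_congr rfl h1, Finset.sum_comm]
  refine Finset.sum_congr rfl fun j _ => ?_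
  rw [← Finset.sum_filter, ← SimpleGraph.incidenceFinset_eq_filter, Finset.sum_const,
    SimpleGraph.card_incidenceFinset_eq_degree, nsmul_eq_mul]

/-- The sum over edges of the "4 if uncut, 0 if cut" indicator. -/
lemma sum_cut_indicator {n : ℕ} (G : SimpleGraph (Fin n)) [DecidableRel G.Adj]
    (S : Finset (Fin n)) :
    ∑ e ∈ G.edgeFinset,
        (if Sym2.lift ⟨fun u v => ((u ∈ S) ≠ (v ∈ S)), fun u v => propext ne_comm⟩ e
          then (0 : ℝ) else 4)
      = 4 * G.edgeFinset.card - 4 * cutCard G S := by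
  rw [Finset.sum_ite, Finset.sum_const_zero, Finset.sum_const, zero_add, nsmul_eq_mul]
  have hsplit := Finset.card_filter_add_card_filter_not
    (s := G.edgeFinset)
    (p := fun e => Sym2.lift ⟨fun u v => ((u ∈ S) ≠ (v ∈ S)), fun u v => propext ne_comm⟩ e)
  unfold cutCard
  push_cast [← hsplit]
  ring

/-- The value of the objective at the `±1` indicator vector of a cut `S`. -/
lemma fObj_signVec {n : ℕ} (G : SimpleGraph (Fin n)) [DecidableRel G.Adj] (c : ℕ)
    (S : Finset (Fin n)) :
    fObj G c (fun j => if j ∈ S then (1 : ℝ) else -1)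
      = 4 * G.edgeFinset.card - 4 * cutCard G S := by
  set z : Fin n → ℝ := fun j => if j ∈ S then (1 : ℝ) else -1 with hz
  have h2 : ∑ j : Fin n, (|z j| - 1) ^ 2 = 0 := by
    refine Finset.sum_eq_zero fun j _ => ?_
    by_cases hj : j ∈ S <;> simp [hz, hj]
  have h1 : ∀ e ∈ G.edgeFinset,
      Sym2.lift ⟨fun u v => (z u + z v) ^ 2, fun u v => by ring⟩ e
        = (if Sym2.lift ⟨fun u v => ((u ∈ S) ≠ (v ∈ S)), fun u v => propext ne_comm⟩ e
            then (0 : ℝ) else 4) := by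
    intro e _
    induction e with
    | _ u v =>
      rw [Sym2.lift_mk, Sym2.lift_mk]
      by_cases hu : u ∈ S <;> by_cases hv : v ∈ S <;> simp [hz, hu, hv] <;> norm_num
  rw [fObj, h2, Finset.sum_congr rfl h1, sum_cut_indicator]
  ring

/-- Per-edge soundness bound. -/
lemma edge_lower_bound {n : ℕ} (G : SimpleGraph (Fin n)) [DecidableRel G.Adj]
    (z : Fin n → ℝ) :
    ∀ e ∈ G.edgeFinset,
      (if Sym2.lift ⟨fun u v => ((u ∈ Finset.univ.filter (fun j => 0 ≤ z j))
            ≠ (v ∈ Finset.univ.filter (fun j => 0 ≤ z j))), fun u v => propext ne_comm⟩ e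
          then (0 : ℝ) else 4)
        - 4 * Sym2.lift ⟨fun u v => abs (|z u| - 1) + abs (|z v| - 1), fun u v => by ring⟩ e
      ≤ Sym2.lift ⟨fun u v => (z u + z v) ^ 2, fun u v => by ring⟩ e := by
  intro e _
  induction e with
  | _ u v =>
    simp only [Sym2.lift_mk, Finset.mem_filter, Finset.mem_univ, true_and]
    by_cases hu : 0 ≤ z u <;> by_cases hv : 0 ≤ z v
    · rw [if_neg (by simp [hu, hv]), abs_of_nonneg hu, abs_of_nonneg hv]
      nlinarith [neg_abs_le (z u - 1), neg_abs_le (z v - 1), sq_nonneg (z u + z v - 2),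
        abs_nonneg (z u - 1), abs_nonneg (z v - 1)]
    · rw [if_pos (by simp [hu, hv])]
      nlinarith [abs_nonneg (|z u| - 1), abs_nonneg (|z v| - 1), sq_nonneg (z u + z v)]
    · rw [if_pos (by simp [hu, hv])]
      nlinarith [abs_nonneg (|z u| - 1), abs_nonneg (|z v| - 1), sq_nonneg (z u + z v)]
    · rw [if_neg (by simp [hu, hv]), abs_of_neg (lt_of_not_ge hu), abs_of_neg (lt_of_not_ge hv)]
      nlinarith [neg_abs_le (-z u - 1), neg_abs_le (-z v - 1), sq_nonneg (z u + z v + 2),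
        abs_nonneg (-z u - 1), abs_nonneg (-z v - 1)]

/-- Global lower bound on the objective. -/
lemma fObj_lower_bound {n : ℕ} (G : SimpleGraph (Fin n)) [DecidableRel G.Adj]
    (hreg : ∀ v, G.degree v = 3) (c : ℕ) (hc : 0 < c) (z : Fin n → ℝ) :
    4 * (G.edgeFinset.card : ℝ) - 4 * maxCut G - 36 * n / c ≤ fObj G c z := by
  have hcR : (0 : ℝ) < c := by exact_mod_cast hc
  set S : Finset (Fin n) := Finset.univ.filter (fun j => 0 ≤ z j) with hS
  have hsum : ∑ e ∈ G.edgeFinset,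
      ((if Sym2.lift ⟨fun u v => ((u ∈ S) ≠ (v ∈ S)), fun u v => propext ne_comm⟩ e
          then (0 : ℝ) else 4)
        - 4 * Sym2.lift ⟨fun u v => abs (|z u| - 1) + abs (|z v| - 1), fun u v => by ring⟩ e)
      ≤ ∑ e ∈ G.edgeFinset, Sym2.lift ⟨fun u v => (z u + z v) ^ 2, fun u v => by ring⟩ e :=
    Finset.sum_le_sum (edge_lower_bound G z)
  rw [Finset.sum_sub_distrib, ← Finset.mul_sum, sum_cut_indicator] at hsum
  have habs : ∑ e ∈ G.edgeFinset,
      Sym2.lift ⟨fun u v => abs (|z u| - 1) + abs (|z v| - 1), fun u v => by ring⟩ e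
      = 3 * ∑ j : Fin n, abs (|z j| - 1) := by
    rw [sum_edge_add G (fun j => abs (|z j| - 1))]
    calc ∑ j : Fin n, (G.degree j : ℝ) * abs (|z j| - 1)
        = ∑ j : Fin n, 3 * abs (|z j| - 1) :=
          Finset.sum_congr rfl fun j _ => by rw [hreg j]; norm_num
      _ = 3 * ∑ j : Fin n, abs (|z j| - 1) := (Finset.mul_sum _ _ _).symm
  rw [habs] at hsum
  have hvert : ∑ j : Fin n, (12 * abs (|z j| - 1) - (c : ℝ) * (|z j| - 1) ^ 2)
      ≤ ∑ j : Fin n, (36 / c : ℝ) := by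
    refine Finset.sum_le_sum fun j _ => ?_
    set t : ℝ := abs (|z j| - 1) with ht
    have h1 : t ^ 2 = (|z j| - 1) ^ 2 := sq_abs _
    rw [← h1, le_div_iff₀ hcR]
    nlinarith [sq_nonneg ((c : ℝ) * t - 6)]
  have hvsum : ∑ j : Fin n, (36 / c : ℝ) = 36 * n / c := by
    rw [Finset.sum_const, Finset.card_univ, Fintype.card_fin, nsmul_eq_mul]
    ring
  rw [hvsum, Finset.sum_sub_distrib, ← Finset.mul_sum, ← Finset.mul_sum] at hvert
  have hcut : (cutCard G S : ℝ) ≤ (maxCut G : ℝ) := by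
    exact_mod_cast Finset.le_sup (f := fun S => cutCard G S) (Finset.mem_univ S)
  rw [fObj]
  linarith [hsum, hvert, hcut]

/-- Two-sided bound from the MAX-CUT reduction: for a 3-regular graph `G` with `m = 3n/2` edges
and `OPT_c = inf_z f_c(z)`, one has `m − OPT_c/4 − 18·n/c ≤ MAXCUT(G) ≤ m − OPT_c/4`. -/
theorem maxCut_fObj_two_sided {n : ℕ} (G : SimpleGraph (Fin n)) [DecidableRel G.Adj]
    (hreg : ∀ v, G.degree v = 3) (hm : 2 * G.edgeFinset.card = 3 * n)
    (c : ℕ) (hc : 0 < c) :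
    (G.edgeFinset.card : ℝ) - (⨅ z : Fin n → ℝ, fObj G c z) / 4 - 18 * n / c ≤ maxCut G ∧
    (maxCut G : ℝ) ≤ (G.edgeFinset.card : ℝ) - (⨅ z : Fin n → ℝ, fObj G c z) / 4 := by
  have hcR : (0 : ℝ) < c := by exact_mod_cast hc
  set m : ℝ := (G.edgeFinset.card : ℝ)
  have hbdd : BddBelow (Set.range (fun z : Fin n → ℝ => fObj G c z)) := by
    refine ⟨4 * m - 4 * maxCut G - 36 * n / c, ?_⟩
    rintro x ⟨z, rfl⟩
    exact fObj_lower_bound G hreg c hc z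
  -- there is a maximizing cut
  obtain ⟨S, -, hS⟩ := Finset.exists_mem_eq_sup (Finset.univ : Finset (Finset (Fin n)))
    ⟨∅, Finset.mem_univ ∅⟩ (fun S => cutCard G S)
  have hupper : (⨅ z : Fin n → ℝ, fObj G c z) ≤ 4 * m - 4 * maxCut G := by
    have := ciInf_le hbdd (fun j => if j ∈ S then (1 : ℝ) else -1)
    rw [fObj_signVec G c S] at this
    have hSc : (cutCard G S : ℝ) = (maxCut G : ℝ) := by
      rw [maxCut, ← hS]
    linarith [this, hSc.ge, hSc.le]
  have hlower : 4 * m - 4 * maxCut G - 36 * n / c ≤ ⨅ z : Fin n → ℝ, fObj G c z :=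
    le_ciInf (fObj_lower_bound G hreg c hc)
  have hnc : (0 : ℝ) ≤ n / c := by positivity
  constructor
  · have : 36 * (n : ℝ) / c = 36 * (n / c) := by ring
    rw [this] at hlower
    have h18 : 18 * (n : ℝ) / c = 18 * (n / c) := by ring
    rw [h18]
    linarith
  · linarith
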